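/- arXiv:math/0505639 — 3 statements merged into one kernel-verified Lean document; each statement's English description precedes it below -/
import Mathlib

section
/- (Quantile-density equivalence, equations (9.52)–(9.57)) Let ξ ∈ ℝ, η ∈ (0,1], and let q : (0,η) → ℝ be strictly increasing and differentiable with q′(τ) > 0 for all τ ∈ (0,η), such that for every compact set L ⊂ (0,∞), sup_{s∈L} |q′(sτ)/q′(τ) − s^{−ξ−1}| → 0 as τ ↘ 0. Fix m > 1 and let v : (0,η) → ℝ satisfy v(τ)/(q(mτ) − q(τ)) → 0 as τ ↘ 0. Then there exist τ₀ ∈ (0,η) and a function ℓ : (0,τ₀) → (0,∞) such that for all τ ∈ (0,τ₀): ℓ(τ)·τ ∈ (0,η) and q(ℓ(τ)·τ) = q(τ) + v(τ); moreover ℓ(τ) → 1 and q′(ℓ(τ)·τ)/q′(τ) → 1 as τ ↘ 0. -/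
open MeasureTheory Filter Topology Real

set_option maxHeartbeats 1000000 in
theorem quantile_density_equivalence
    (ξ η : ℝ) (hη : η ∈ Set.Ioc (0:ℝ) 1)
    (q q' : ℝ → ℝ)
    (hmono : StrictMonoOn q (Set.Ioo (0:ℝ) η))
    (hderiv : ∀ τ ∈ Set.Ioo (0:ℝ) η, HasDerivAt q (q' τ) τ)
    (hq'pos : ∀ τ ∈ Set.Ioo (0:ℝ) η, 0 < q' τ)
    (hreg : ∀ L : Set ℝ, IsCompact L → L ⊆ Set.Ioi 0 →
      ∀ ε > (0:ℝ), ∀ᶠ τ in 𝓝[>] (0:ℝ), ∀ s ∈ L, |q' (s * τ) / q' τ - s ^ (-ξ - 1)| < ε)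
    (m : ℝ) (hm : 1 < m)
    (v : ℝ → ℝ)
    (hv : Tendsto (fun τ => v τ / (q (m * τ) - q τ)) (𝓝[>] (0:ℝ)) (𝓝 0))
    :
    ∃ τ₀ ∈ Set.Ioo (0:ℝ) η, ∃ l : ℝ → ℝ,
      (∀ τ ∈ Set.Ioo (0:ℝ) τ₀, 0 < l τ ∧ l τ * τ ∈ Set.Ioo (0:ℝ) η ∧
        q (l τ * τ) = q τ + v τ) ∧
      Tendsto l (𝓝[>] (0:ℝ)) (𝓝 1) ∧
      Tendsto (fun τ => q' (l τ * τ) / q' τ) (𝓝[>] (0:ℝ)) (𝓝 1) := by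
  classical
  have hη0 : (0:ℝ) < η := hη.1
  have hm2 : (1:ℝ) < m + 2 := by linarith
  -- the compact set and the limit function
  set K : Set ℝ := Set.Icc (1/2 : ℝ) (m + 2) with hK_def
  have hKc : IsCompact K := isCompact_Icc
  have hKpos : K ⊆ Set.Ioi 0 := fun s hs => by
    have := hs.1; simp only [Set.mem_Ioi]; linarith
  have hKne : K.Nonempty := ⟨1/2, by constructor <;> [linarith; linarith]⟩
  set g : ℝ → ℝ := fun s => s ^ (-ξ - 1) with hg_def
  have hgcont : ContinuousOn g K := fun s hs =>
    (Real.continuousAt_rpow_const s (-ξ - 1)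
      (Or.inl (ne_of_gt (hKpos hs)))).continuousWithinAt
  obtain ⟨s₀, hs₀K, hs₀'⟩ := hKc.exists_isMinOn hKne hgcont
  obtain ⟨s₁, hs₁K, hs₁'⟩ := hKc.exists_isMaxOn hKne hgcont
  have hs₀ : ∀ s ∈ K, g s₀ ≤ g s := fun s hs => hs₀' hs
  have hs₁ : ∀ s ∈ K, g s ≤ g s₁ := fun s hs => hs₁' hs
  set c₀ : ℝ := g s₀ with hc₀_def
  set C₀ : ℝ := g s₁ with hC₀_def
  have hc₀ : 0 < c₀ := Real.rpow_pos_of_pos (hKpos hs₀K) _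
  have hC₀ : c₀ ≤ C₀ := hs₁ s₀ hs₀K
  set C₁ : ℝ := C₀ + c₀ / 2 with hC₁_def
  have hC₁ : 0 < C₁ := by rw [hC₁_def]; linarith
  have hE := hreg K hKc hKpos (c₀ / 2) (by linarith)
  -- the key quantitative estimate
  have key : ∀ δ : ℝ, 0 < δ → δ ≤ 1/2 →
      ∀ᶠ τ in 𝓝[>] (0:ℝ), 0 < τ ∧ (m + 2) * τ < η ∧
        q ((1 - δ) * τ) < q τ + v τ ∧ q τ + v τ < q ((1 + δ) * τ) := by
    intro δ hδ hδ'
    set κ : ℝ := c₀ * δ / (2 * (C₁ * (m - 1))) with hκ_def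
    have hm1 : 0 < m - 1 := by linarith
    have hκ : 0 < κ := by
      apply div_pos (by positivity); positivity
    have hIoo : Set.Ioo (0:ℝ) (η / (m + 2)) ∈ 𝓝[>] (0:ℝ) :=
      Ioo_mem_nhdsGT (by positivity)
    filter_upwards [hE, Metric.tendsto_nhds.mp hv κ hκ, hIoo] with τ hτE hτv hτI
    obtain ⟨hτ0, hτu⟩ := hτI
    have hτη2 : (m + 2) * τ < η := by
      rw [lt_div_iff₀ (by linarith)] at hτu; linarith [hτu]
    have hτη : τ < η := by nlinarith
    have hq'τ : 0 < q' τ := hq'pos τ ⟨hτ0, hτη⟩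
    -- ratio bounds for s ∈ K
    have hratio : ∀ s ∈ K, c₀ / 2 * q' τ < q' (s * τ) ∧ q' (s * τ) < C₁ * q' τ := by
      intro s hs
      have h1 := hτE s hs
      have h2 := abs_lt.mp h1
      have hgs : (s:ℝ) ^ (-ξ - 1) = g s := rfl
      rw [hgs] at h2
      have hgl : c₀ ≤ g s := hs₀ s hs
      have hgu : g s ≤ C₀ := hs₁ s hs
      constructor
      · have hlt : c₀ / 2 < q' (s * τ) / q' τ := by linarith [h2.1]
        calc c₀ / 2 * q' τ < q' (s * τ) / q' τ * q' τ :=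
              mul_lt_mul_of_pos_right hlt hq'τ
          _ = q' (s * τ) := div_mul_cancel₀ _ hq'τ.ne'
      · have hlt : q' (s * τ) / q' τ < C₁ := by rw [hC₁_def]; linarith [h2.2]
        calc q' (s * τ) = q' (s * τ) / q' τ * q' τ := (div_mul_cancel₀ _ hq'τ.ne').symm
          _ < C₁ * q' τ := mul_lt_mul_of_pos_right hlt hq'τ
    -- mean value slope representation
    have hslope : ∀ a b : ℝ, 1/2 ≤ a → a < b → b ≤ m + 2 →
        ∃ s ∈ Set.Ioo a b, q (b * τ) - q (a * τ) = q' (s * τ) * ((b - a) * τ) := by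
      intro a b ha hab hb
      have h1 : a * τ < b * τ := mul_lt_mul_of_pos_right hab hτ0
      have h2 : 0 < a * τ := by nlinarith
      have h3 : b * τ < η := by nlinarith
      have hsub : Set.Icc (a * τ) (b * τ) ⊆ Set.Ioo 0 η := fun x hx =>
        ⟨lt_of_lt_of_le h2 hx.1, lt_of_le_of_lt hx.2 h3⟩
      have hcont : ContinuousOn q (Set.Icc (a * τ) (b * τ)) := fun x hx =>
        (hderiv x (hsub hx)).continuousAt.continuousWithinAt
      have hd : ∀ x ∈ Set.Ioo (a * τ) (b * τ), HasDerivAt q (q' x) x := fun x hx =>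
        hderiv x (hsub (Set.Ioo_subset_Icc_self hx))
      obtain ⟨c, hc, hc'⟩ := exists_hasDerivAt_eq_slope q q' h1 hcont hd
      refine ⟨c / τ, ⟨?_, ?_⟩, ?_⟩
      · rw [lt_div_iff₀ hτ0]; exact hc.1
      · rw [div_lt_iff₀ hτ0]; exact hc.2
      · rw [div_mul_cancel₀ c hτ0.ne', hc',
          show (b - a) * τ = b * τ - a * τ by ring,
          div_mul_cancel₀ _ (sub_ne_zero.mpr h1.ne')]
    -- upper bound on q(mτ) - q(τ)
    have h_up : q (m * τ) - q τ < C₁ * ((m - 1) * τ) * q' τ := by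
      obtain ⟨s, hs, heq⟩ := hslope 1 m (by norm_num) hm (by linarith)
      have hsK : s ∈ K := ⟨by linarith [hs.1], by linarith [hs.2]⟩
      have := (hratio s hsK).2
      rw [one_mul] at heq
      rw [heq]
      have hpos : 0 < (m - 1) * τ := by positivity
      calc q' (s * τ) * ((m - 1) * τ) < C₁ * q' τ * ((m - 1) * τ) :=
            mul_lt_mul_of_pos_right this hpos
        _ = C₁ * ((m - 1) * τ) * q' τ := by ring
    -- lower bounds on the δ-band increments
    have h_lo1 : c₀ / 2 * q' τ * (δ * τ) < q ((1 + δ) * τ) - q τ := by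
      obtain ⟨s, hs, heq⟩ := hslope 1 (1 + δ) (by norm_num) (by linarith) (by linarith)
      have hsK : s ∈ K := ⟨by linarith [hs.1], by linarith [hs.2]⟩
      have := (hratio s hsK).1
      rw [one_mul] at heq
      rw [heq, show (1 + δ - 1 : ℝ) = δ by ring]
      exact mul_lt_mul_of_pos_right this (by positivity)
    have h_lo2 : c₀ / 2 * q' τ * (δ * τ) < q τ - q ((1 - δ) * τ) := by
      obtain ⟨s, hs, heq⟩ := hslope (1 - δ) 1 (by linarith) (by linarith) (by linarith)
      have hsK : s ∈ K := ⟨by linarith [hs.1], by linarith [hs.2]⟩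
      have := (hratio s hsK).1
      rw [one_mul] at heq
      rw [heq, show (1 - (1 - δ) : ℝ) = δ by ring]
      exact mul_lt_mul_of_pos_right this (by positivity)
    -- bound on |v|
    have hmτ : m * τ ∈ Set.Ioo (0:ℝ) η := ⟨by positivity, by nlinarith⟩
    have hqm : 0 < q (m * τ) - q τ :=
      sub_pos.mpr (hmono ⟨hτ0, hτη⟩ hmτ (by nlinarith))
    have hτv' : |v τ| < κ * (q (m * τ) - q τ) := by
      rw [Real.dist_eq, sub_zero, abs_div, abs_of_pos hqm, div_lt_iff₀ hqm] at hτv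
      exact hτv
    have hκeq : κ * (C₁ * ((m - 1) * τ) * q' τ) = c₀ / 2 * q' τ * (δ * τ) := by
      rw [hκ_def]; field_simp
    have hvb : |v τ| < c₀ / 2 * q' τ * (δ * τ) := by
      calc |v τ| < κ * (q (m * τ) - q τ) := hτv'
        _ ≤ κ * (C₁ * ((m - 1) * τ) * q' τ) := by
            apply mul_le_mul_of_nonneg_left h_up.le hκ.le
        _ = c₀ / 2 * q' τ * (δ * τ) := hκeq
    have hvb' := abs_lt.mp hvb
    exact ⟨hτ0, hτη2, by linarith [hvb'.1, h_lo2], by linarith [hvb'.2, h_lo1]⟩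
  -- extract an interval from the δ = 1/2 case
  obtain ⟨t, ht, htsub⟩ := mem_nhdsGT_iff_exists_Ioo_subset.mp
    (key (1/2) (by norm_num) le_rfl)
  rw [Set.mem_Ioi] at ht
  -- define l by choice
  set l : ℝ → ℝ := fun τ =>
    if h : ∃ x, (0 < x ∧ x < η) ∧ τ / 2 < x ∧ x < 3/2 * τ ∧ q x = q τ + v τ
    then h.choose / τ else 1 with hl_def
  -- existence of the solution on (0, t)
  have hex : ∀ τ ∈ Set.Ioo (0:ℝ) t,
      ∃ x, (0 < x ∧ x < η) ∧ τ / 2 < x ∧ x < 3/2 * τ ∧ q x = q τ + v τ := by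
    intro τ hτ
    have hP := htsub hτ
    obtain ⟨hτ0, hτη2, hlo, hhi⟩ := hP
    have h12 : (1 - 1/2 : ℝ) * τ = τ / 2 := by ring
    have h32 : (1 + 1/2 : ℝ) * τ = 3/2 * τ := by ring
    rw [h12] at hlo; rw [h32] at hhi
    have hle : τ / 2 ≤ 3/2 * τ := by linarith
    have hsub' : Set.Icc (τ/2) (3/2 * τ) ⊆ Set.Ioo 0 η := by
      intro x hx
      constructor
      · linarith [hx.1]
      · have : 3/2 * τ < η := by nlinarith
        linarith [hx.2]
    have hcont : ContinuousOn q (Set.Icc (τ/2) (3/2 * τ)) := fun x hx =>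
      (hderiv x (hsub' hx)).continuousAt.continuousWithinAt
    have hIVT := intermediate_value_Ioo hle hcont
    have hmem : q τ + v τ ∈ Set.Ioo (q (τ/2)) (q (3/2 * τ)) := ⟨hlo, hhi⟩
    obtain ⟨x, hx, hqx⟩ := hIVT hmem
    refine ⟨x, ⟨?_, ?_⟩, hx.1, hx.2, hqx⟩
    · linarith [hx.1]
    · have : 3/2 * τ < η := by nlinarith
      linarith [hx.2]
  -- basic properties of l on (0, t)
  have hlval : ∀ τ ∈ Set.Ioo (0:ℝ) t,
      (0 < l τ ∧ (l τ * τ ∈ Set.Ioo (0:ℝ) η) ∧ q (l τ * τ) = q τ + v τ) ∧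
      τ / 2 < l τ * τ ∧ l τ * τ < 3/2 * τ := by
    intro τ hτ
    have h := hex τ hτ
    have hτ0 : 0 < τ := hτ.1
    have hlτ : l τ = h.choose / τ := by simp only [hl_def]; exact dif_pos h
    have hspec := h.choose_spec
    have hmul : l τ * τ = h.choose := by
      rw [hlτ, div_mul_cancel₀ _ hτ0.ne']
    refine ⟨⟨?_, ?_, ?_⟩, ?_, ?_⟩
    · rw [hlτ]; exact div_pos hspec.1.1 hτ0
    · rw [hmul]; exact ⟨hspec.1.1, hspec.1.2⟩
    · rw [hmul]; exact hspec.2.2.2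
    · rw [hmul]; exact hspec.2.1
    · rw [hmul]; exact hspec.2.2.1
  -- band localization: for any δ ≤ 1/2, eventually l τ ∈ (1-δ, 1+δ)
  have hband : ∀ δ : ℝ, 0 < δ → δ ≤ 1/2 →
      ∀ᶠ τ in 𝓝[>] (0:ℝ), 1 - δ < l τ ∧ l τ < 1 + δ := by
    intro δ hδ hδ'
    have hIoo : Set.Ioo (0:ℝ) t ∈ 𝓝[>] (0:ℝ) :=
      Ioo_mem_nhdsGT ht
    filter_upwards [key δ hδ hδ', hIoo] with τ hP hτ
    obtain ⟨hτ0, hτη2, hlo, hhi⟩ := hP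
    obtain ⟨⟨_, hxmem, hqx⟩, _, _⟩ := hlval τ hτ
    have hτη : τ < η := by nlinarith
    -- lower bound
    have h1 : (1 - δ) * τ < l τ * τ := by
      by_contra hcon
      push_neg at hcon
      have hmem1 : (1 - δ) * τ ∈ Set.Ioo (0:ℝ) η := by
        constructor
        · nlinarith
        · nlinarith
      have := hmono.monotoneOn hxmem hmem1 hcon
      rw [hqx] at this
      linarith
    have h2 : l τ * τ < (1 + δ) * τ := by
      by_contra hcon
      push_neg at hcon
      have hmem1 : (1 + δ) * τ ∈ Set.Ioo (0:ℝ) η := by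
        constructor
        · nlinarith
        · nlinarith
      have := hmono.monotoneOn hmem1 hxmem hcon
      rw [hqx] at this
      linarith
    constructor
    · have := (mul_lt_mul_iff_of_pos_right hτ0).mp h1; linarith
    · have := (mul_lt_mul_iff_of_pos_right hτ0).mp h2; linarith
  -- l → 1
  have hltend : Tendsto l (𝓝[>] (0:ℝ)) (𝓝 1) := by
    rw [Metric.tendsto_nhds]
    intro ε hε
    set δ : ℝ := min (ε/2) (1/2) with hδ_def
    have hδ0 : 0 < δ := lt_min (by linarith) (by norm_num)
    have hδ1 : δ ≤ 1/2 := min_le_right _ _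
    have hδε : δ < ε := lt_of_le_of_lt (min_le_left _ _) (by linarith)
    filter_upwards [hband δ hδ0 hδ1] with τ hτ
    rw [Real.dist_eq, abs_lt]
    constructor <;> [linarith [hτ.1]; linarith [hτ.2]]
  -- the final τ₀
  have hτ₀pos : 0 < min t (η/2) := lt_min ht (by linarith)
  refine ⟨min t (η/2), ⟨hτ₀pos, lt_of_le_of_lt (min_le_right _ _) (by linarith)⟩, l, ?_, hltend, ?_⟩
  · intro τ hτ
    have hτ' : τ ∈ Set.Ioo (0:ℝ) t :=
      ⟨hτ.1, lt_of_lt_of_le hτ.2 (min_le_left _ _)⟩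
    exact (hlval τ hτ').1
  · -- q'(lτ·τ)/q'(τ) → 1
    rw [Metric.tendsto_nhds]
    intro ε hε
    have hE2 := hreg K hKc hKpos (ε/2) (by linarith)
    have hgc : ContinuousAt g 1 :=
      Real.continuousAt_rpow_const 1 (-ξ - 1) (Or.inl one_ne_zero)
    have hg1 : g 1 = 1 := Real.one_rpow _
    have hgtend : Tendsto (fun τ => g (l τ)) (𝓝[>] (0:ℝ)) (𝓝 1) := by
      rw [← hg1]
      exact (hgc.tendsto).comp hltend
    have hgev : ∀ᶠ τ in 𝓝[>] (0:ℝ), |g (l τ) - 1| < ε/2 := by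
      have := Metric.tendsto_nhds.mp hgtend (ε/2) (by linarith)
      filter_upwards [this] with τ h
      rwa [Real.dist_eq] at h
    have hIoo : Set.Ioo (0:ℝ) t ∈ 𝓝[>] (0:ℝ) :=
      Ioo_mem_nhdsGT ht
    filter_upwards [hE2, hgev, hIoo, hband (1/2) (by norm_num) le_rfl] with τ hτE hτg hτ hτb
    have hτ0 : 0 < τ := hτ.1
    have hlK : l τ ∈ K := ⟨by linarith [hτb.1], by linarith [hτb.2]⟩
    have h1 := hτE (l τ) hlK
    rw [Real.dist_eq]
    calc |q' (l τ * τ) / q' τ - 1|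
        ≤ |q' (l τ * τ) / q' τ - g (l τ)| + |g (l τ) - 1| := by
          have := abs_sub_le (q' (l τ * τ) / q' τ) (g (l τ)) 1
          linarith
      _ < ε/2 + ε/2 := add_lt_add h1 hτg
      _ = ε := by ring
end

section
/- (Population spacings limit underlying Theorem 6.1(ii), type 3 tails) Under the linear quantile regression setup with type 3 tails of index ξ < 0, there exists a vector c ∈ ℝ^d with μ_Xᵀc = 1, xᵀc > 0 and K(x) = (xᵀc)^{1/ξ} for all x ∈ 𝐗, such that for all x, ẋ ∈ 𝐗, every l > 0 and every m ∈ (0,1) ∪ (1,∞): xᵀ(γ(m l τ) − γ(l τ)) / (ẋᵀ(γ(m τ) − γ(τ))) → l^{−ξ}·(xᵀc)/(ẋᵀc) as τ ↘ 0, with ẋᵀ(γ(mτ) − γ(τ)) ≠ 0 for all sufficiently small τ (all quantile arguments lying in (0,η] for τ small enough). -/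
open MeasureTheory Filter Topology Real Set

namespace ExtremalQR

noncomputable def qf (Fu : ℝ → ℝ) (τ : ℝ) : ℝ := sInf {z | τ < Fu z}

structure Tail (Fu : ℝ → ℝ) (ξ : ℝ) : Prop where
  mono : Monotone Fu
  rc : ∀ z : ℝ, ContinuousWithinAt Fu (Set.Ici z) z
  nonneg : ∀ z : ℝ, 0 ≤ Fu z
  hξ : ξ < 0
  zero : ∀ z < (0:ℝ), Fu z = 0
  pos : ∀ z > (0:ℝ), 0 < Fu z
  reg : ∀ v > (0:ℝ), Tendsto (fun z => Fu (v * z) / Fu z) (𝓝[>] (0:ℝ)) (𝓝 (v ^ (-1/ξ)))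

namespace Tail

variable {Fu : ℝ → ℝ} {ξ : ℝ} (h : Tail Fu ξ)

lemma hξ0 (h : Tail Fu ξ) : 0 < -1/ξ := by
  have := h.hξ
  rw [div_pos_iff]
  right; constructor <;> linarith

/-- Fu tends to 0 from the right at 0. -/
lemma tendsto_zero (h : Tail Fu ξ) : Tendsto Fu (𝓝[>] (0:ℝ)) (𝓝 0) := by
  have hmono := h.mono
  have hT : Tendsto Fu (𝓝[>] (0:ℝ)) (𝓝 (sInf (Fu '' Ioi 0))) :=
    hmono.tendsto_nhdsGT 0
  set L := sInf (Fu '' Ioi 0) with hL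
  have hbdd : BddBelow (Fu '' Ioi 0) := ⟨0, fun y hy => by
    obtain ⟨z, _, rfl⟩ := hy; exact h.nonneg z⟩
  have hLnonneg : 0 ≤ L := le_csInf ⟨Fu 1, ⟨1, Set.mem_Ioi.2 one_pos, rfl⟩⟩ (fun y hy => by
    obtain ⟨z, _, rfl⟩ := hy; exact h.nonneg z)
  have hLle : ∀ z > (0:ℝ), L ≤ Fu z := fun z hz => csInf_le hbdd ⟨z, hz, rfl⟩
  rcases eq_or_lt_of_le hLnonneg with hL0 | hLpos
  · rwa [← hL0] at hT
  · exfalso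
    -- Fu (2 z) / Fu z → 1, but also → 2^(-1/ξ) > 1
    have h2 : Tendsto (fun z => Fu (2 * z)) (𝓝[>] (0:ℝ)) (𝓝 L) := by
      apply hT.comp
      rw [tendsto_nhdsWithin_iff]
      constructor
      · have : Tendsto (fun z : ℝ => 2 * z) (𝓝 0) (𝓝 (2 * 0)) :=
          (continuous_const.mul continuous_id).tendsto 0
        simpa using this.mono_left nhdsWithin_le_nhds
      · filter_upwards [self_mem_nhdsWithin] with z hz
        exact mul_pos two_pos (Set.mem_Ioi.mp hz)
    have h1 : Tendsto Fu (𝓝[>] (0:ℝ)) (𝓝 L) := hT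
    have hdiv : Tendsto (fun z => Fu (2 * z) / Fu z) (𝓝[>] (0:ℝ)) (𝓝 (L / L)) :=
      h2.div h1 hLpos.ne'
    rw [div_self hLpos.ne'] at hdiv
    have := tendsto_nhds_unique (h.reg 2 two_pos) hdiv
    have h21 : (1:ℝ) < (2:ℝ) ^ (-1/ξ) :=
      Real.one_lt_rpow_iff_of_pos two_pos |>.mpr (Or.inl ⟨one_lt_two, h.hξ0⟩)
    rw [this] at h21
    exact lt_irrefl _ h21

lemma fu_zero' (h : Tail Fu ξ) : ∀ z ≤ (0:ℝ), Fu z = 0 := by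
  intro z hz
  rcases lt_or_eq_of_le hz with hz' | rfl
  · exact h.zero z hz'
  · refine le_antisymm ?_ (h.nonneg 0)
    refine ge_of_tendsto h.tendsto_zero ?_
    filter_upwards [self_mem_nhdsWithin] with w hw
    exact h.mono (le_of_lt hw)

lemma mem_Ioi_of_mem (h : Tail Fu ξ) {τ z : ℝ} (hτ : 0 < τ) (hz : τ < Fu z) :
    0 < z := by
  by_contra hz'
  push_neg at hz'
  rw [h.fu_zero' z hz'] at hz
  linarith

lemma bddBelow_S (h : Tail Fu ξ) {τ : ℝ} (hτ : 0 < τ) : BddBelow {z | τ < Fu z} :=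
  ⟨0, fun z hz => le_of_lt (h.mem_Ioi_of_mem hτ hz)⟩

lemma qf_nonneg (h : Tail Fu ξ) {τ : ℝ} (hτ : 0 < τ) : 0 ≤ qf Fu τ :=
  Real.sInf_nonneg (fun z hz => le_of_lt (h.mem_Ioi_of_mem hτ hz))

lemma qf_le (h : Tail Fu ξ) {τ z : ℝ} (hτ : 0 < τ) (hz : τ < Fu z) : qf Fu τ ≤ z :=
  csInf_le (h.bddBelow_S hτ) hz

lemma fu_le_of_lt_qf (h : Tail Fu ξ) {τ z : ℝ} (hτ : 0 < τ) (hz : z < qf Fu τ) :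
    Fu z ≤ τ := by
  by_contra hc
  push_neg at hc
  exact absurd (h.qf_le hτ hc) (not_le.mpr hz)

lemma le_qf (h : Tail Fu ξ) {τ w : ℝ} (hne : {z | τ < Fu z}.Nonempty)
    (hall : ∀ z, τ < Fu z → w ≤ z) : w ≤ qf Fu τ :=
  le_csInf hne hall

lemma lt_fu_of_qf_lt (h : Tail Fu ξ) {τ z : ℝ} (hne : {w | τ < Fu w}.Nonempty)
    (hz : qf Fu τ < z) : τ < Fu z := by
  obtain ⟨y, hy, hyz⟩ := exists_lt_of_csInf_lt hne hz
  exact lt_of_lt_of_le hy (h.mono (le_of_lt hyz))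

lemma le_fu_qf (h : Tail Fu ξ) {τ : ℝ} (hτ : 0 < τ) (hne : {w | τ < Fu w}.Nonempty) :
    τ ≤ Fu (qf Fu τ) := by
  have hrc : Tendsto Fu (𝓝[>] (qf Fu τ)) (𝓝 (Fu (qf Fu τ))) :=
    (h.rc (qf Fu τ)).mono_left (nhdsWithin_mono _ Ioi_subset_Ici_self)
  refine ge_of_tendsto hrc ?_
  filter_upwards [self_mem_nhdsWithin] with z hz
  exact le_of_lt (h.lt_fu_of_qf_lt hne hz)

lemma qf_pos (h : Tail Fu ξ) {τ : ℝ} (hτ : 0 < τ) (hne : {w | τ < Fu w}.Nonempty) :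
    0 < qf Fu τ := by
  by_contra hc
  push_neg at hc
  have := h.fu_zero' _ hc
  have := h.le_fu_qf hτ hne
  linarith

lemma qf_mono (h : Tail Fu ξ) {τ₁ τ₂ : ℝ} (hτ₁ : 0 < τ₁) (hle : τ₁ ≤ τ₂)
    (hne : {w | τ₂ < Fu w}.Nonempty) : qf Fu τ₁ ≤ qf Fu τ₂ :=
  csInf_le_csInf (h.bddBelow_S hτ₁) hne (fun z hz => lt_of_le_of_lt hle hz)

lemma ev_base (h : Tail Fu ξ) : ∀ᶠ τ in 𝓝[>] (0:ℝ), 0 < τ ∧ τ < Fu 1 := by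
  have h1 : Ioo (0:ℝ) (Fu 1) ∈ 𝓝[>] (0:ℝ) :=
    Ioo_mem_nhdsGT_of_mem ⟨le_refl 0, h.pos 1 one_pos⟩
  filter_upwards [h1] with τ hτ
  exact ⟨hτ.1, hτ.2⟩

lemma ev_nonempty (h : Tail Fu ξ) :
    ∀ᶠ τ in 𝓝[>] (0:ℝ), {w | τ < Fu w}.Nonempty := by
  filter_upwards [h.ev_base] with τ hτ
  exact ⟨1, hτ.2⟩

lemma ev_qf_pos (h : Tail Fu ξ) : ∀ᶠ τ in 𝓝[>] (0:ℝ), 0 < qf Fu τ := by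
  filter_upwards [h.ev_base] with τ hτ
  exact h.qf_pos hτ.1 ⟨1, hτ.2⟩

lemma qf_tendsto (h : Tail Fu ξ) : Tendsto (qf Fu) (𝓝[>] (0:ℝ)) (𝓝[>] (0:ℝ)) := by
  rw [tendsto_nhdsWithin_iff]
  constructor
  · rw [tendsto_order]
    constructor
    · intro a ha
      filter_upwards [h.ev_base] with τ hτ
      exact lt_of_lt_of_le ha (h.qf_nonneg hτ.1)
    · intro b hb
      have hbp : 0 < min (b/2) 1 := lt_min (by linarith) one_pos
      have hmem : Ioo (0:ℝ) (Fu (min (b/2) 1)) ∈ 𝓝[>] (0:ℝ) :=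
        Ioo_mem_nhdsGT_of_mem ⟨le_refl 0, h.pos _ hbp⟩
      filter_upwards [hmem] with τ hτ
      calc qf Fu τ ≤ min (b/2) 1 := h.qf_le hτ.1 hτ.2
        _ ≤ b/2 := min_le_left _ _
        _ < b := by linarith
  · exact h.ev_qf_pos

/-- helper: multiplication by a positive constant preserves `𝓝[>] 0`. -/
lemma _root_.ExtremalQR.tendsto_mul_nhdsWithin {r : ℝ} (hr : 0 < r) :
    Tendsto (fun τ : ℝ => r * τ) (𝓝[>] (0:ℝ)) (𝓝[>] (0:ℝ)) := by
  rw [tendsto_nhdsWithin_iff]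
  constructor
  · have : Tendsto (fun τ : ℝ => r * τ) (𝓝 0) (𝓝 (r * 0)) :=
      (continuous_const.mul continuous_id).tendsto 0
    simpa using this.mono_left nhdsWithin_le_nhds
  · filter_upwards [self_mem_nhdsWithin] with τ hτ
    exact mul_pos hr hτ

/-- `Fu (qf τ) / τ → 1`. -/
lemma tendsto_fu_qf_div (h : Tail Fu ξ) :
    Tendsto (fun τ => Fu (qf Fu τ) / τ) (𝓝[>] (0:ℝ)) (𝓝 1) := by
  have hged : ∀ᶠ τ in 𝓝[>] (0:ℝ), 1 ≤ Fu (qf Fu τ) / τ := by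
    filter_upwards [h.ev_base] with τ hτ
    rw [le_div_iff₀ hτ.1, one_mul]
    exact h.le_fu_qf hτ.1 ⟨1, hτ.2⟩
  rw [tendsto_order]
  constructor
  · intro a ha
    filter_upwards [hged] with τ hτ
    linarith
  · intro b hb
    -- choose ε ∈ (0,1) with (1-ε)^(1/ξ) < b
    have hcont : ContinuousAt (fun ε : ℝ => (1 - ε) ^ (1/ξ)) 0 := by
      have h2 : ContinuousAt (fun ε : ℝ => 1 - ε) 0 :=
        (continuous_const.sub continuous_id).continuousAt
      have h1 : ContinuousAt (fun t : ℝ => t ^ (1/ξ)) ((fun ε : ℝ => 1 - ε) 0) := by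
        simp only [sub_zero]
        exact Real.continuousAt_rpow_const 1 (1/ξ) (Or.inl one_ne_zero)
      exact h1.comp h2
    have hev : ∀ᶠ ε in 𝓝 (0:ℝ), (1 - ε) ^ (1/ξ) < b := by
      apply hcont.eventually_lt_const
      simpa using hb
    obtain ⟨ε, hεb, hε0, hε1⟩ :
        ∃ ε : ℝ, (1 - ε) ^ (1/ξ) < b ∧ 0 < ε ∧ ε < 1 := by
      have := (hev.filter_mono nhdsWithin_le_nhds).and
        (Ioo_mem_nhdsGT (one_pos : (0:ℝ) < 1) : Ioo (0:ℝ) 1 ∈ 𝓝[>] (0:ℝ))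
      obtain ⟨ε, h1, h2⟩ := this.exists
      exact ⟨ε, h1, h2.1, h2.2⟩
    have h1ε : (0:ℝ) < 1 - ε := by linarith
    -- Fu (qf τ) / Fu ((1-ε) qf τ) → (1-ε)^(1/ξ)
    have hkey : Tendsto (fun τ => Fu (qf Fu τ) / Fu ((1-ε) * qf Fu τ)) (𝓝[>] (0:ℝ))
        (𝓝 ((1-ε) ^ (1/ξ))) := by
      have hr : Tendsto (fun z => Fu ((1-ε) * z) / Fu z) (𝓝[>] (0:ℝ))
          (𝓝 ((1-ε) ^ (-1/ξ))) := h.reg (1-ε) h1ε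
      have hcomp := (hr.comp h.qf_tendsto).inv₀
        (ne_of_gt (Real.rpow_pos_of_pos h1ε _))
      have hinv : ((1-ε : ℝ) ^ (-1/ξ))⁻¹ = (1-ε) ^ (1/ξ) := by
        rw [← Real.rpow_neg (le_of_lt h1ε)]
        congr 1; ring
      rw [hinv] at hcomp
      refine hcomp.congr' ?_
      filter_upwards [h.ev_base] with τ hτ
      have hq := h.qf_pos hτ.1 ⟨1, hτ.2⟩
      have hden : 0 < Fu ((1-ε) * qf Fu τ) := h.pos _ (mul_pos h1ε hq)
      have hnum : 0 < Fu (qf Fu τ) := lt_of_lt_of_le hτ.1 (h.le_fu_qf hτ.1 ⟨1, hτ.2⟩)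
      simp only [Function.comp]
      rw [inv_div]
    have hblt : ∀ᶠ τ in 𝓝[>] (0:ℝ), Fu (qf Fu τ) / Fu ((1-ε) * qf Fu τ) < b :=
      hkey.eventually_lt_const hεb
    filter_upwards [hblt, h.ev_base] with τ hτ1 hτ2
    have hq := h.qf_pos hτ2.1 ⟨1, hτ2.2⟩
    have hden : 0 < Fu ((1-ε) * qf Fu τ) := h.pos _ (mul_pos h1ε hq)
    have hdle : Fu ((1-ε) * qf Fu τ) ≤ τ := by
      apply h.fu_le_of_lt_qf hτ2.1
      nlinarith
    calc Fu (qf Fu τ) / τ ≤ Fu (qf Fu τ) / Fu ((1-ε) * qf Fu τ) := by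
          apply div_le_div_of_nonneg_left (h.nonneg _) hden hdle
      _ < b := hτ1

/-- `Fu (v * qf τ) / τ → v^(-1/ξ)` for `v > 0`. -/
lemma tendsto_fu_v_qf (h : Tail Fu ξ) {v : ℝ} (hv : 0 < v) :
    Tendsto (fun τ => Fu (v * qf Fu τ) / τ) (𝓝[>] (0:ℝ)) (𝓝 (v ^ (-1/ξ))) := by
  have h1 : Tendsto (fun τ => Fu (v * qf Fu τ) / Fu (qf Fu τ)) (𝓝[>] (0:ℝ))
      (𝓝 (v ^ (-1/ξ))) := (h.reg v hv).comp h.qf_tendsto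
  have h2 := h1.mul h.tendsto_fu_qf_div
  rw [mul_one] at h2
  refine h2.congr' ?_
  filter_upwards [h.ev_base] with τ hτ
  have hnum : 0 < Fu (qf Fu τ) := lt_of_lt_of_le hτ.1 (h.le_fu_qf hτ.1 ⟨1, hτ.2⟩)
  field_simp

/-- Inverse regular variation: `qf (m τ) / qf τ → m^(-ξ)` for `m > 0`. -/
lemma qf_ratio (h : Tail Fu ξ) {m : ℝ} (hm : 0 < m) :
    Tendsto (fun τ => qf Fu (m * τ) / qf Fu τ) (𝓝[>] (0:ℝ)) (𝓝 (m ^ (-ξ))) := by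
  have hmξ : 0 < m ^ (-ξ) := Real.rpow_pos_of_pos hm _
  have hevm : ∀ᶠ τ in 𝓝[>] (0:ℝ), 0 < m * τ ∧ m * τ < Fu 1 :=
    (ExtremalQR.tendsto_mul_nhdsWithin hm).eventually h.ev_base
  rw [tendsto_order]
  constructor
  · intro a ha
    rcases le_or_gt a 0 with ha0 | ha0
    · filter_upwards [h.ev_base, hevm] with τ hτ hmτ
      have h1 := h.qf_pos hτ.1 ⟨1, hτ.2⟩
      have h2 := h.qf_pos hmτ.1 ⟨1, hmτ.2⟩
      exact lt_of_le_of_lt ha0 (div_pos h2 h1)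
    · obtain ⟨v, hav, hvm⟩ := exists_between ha
      have hv0 : 0 < v := lt_trans ha0 hav
      have hvlt : v ^ (-1/ξ) < m := by
        have hh := Real.rpow_lt_rpow (le_of_lt hv0) hvm h.hξ0
        rwa [← Real.rpow_mul (le_of_lt hm),
          show (-ξ) * (-1/ξ) = 1 by field_simp [ne_of_lt h.hξ], Real.rpow_one] at hh
      have hev : ∀ᶠ τ in 𝓝[>] (0:ℝ), Fu (v * qf Fu τ) / τ < m :=
        (h.tendsto_fu_v_qf hv0).eventually_lt_const hvlt
      filter_upwards [hev, h.ev_base, hevm] with τ hτ1 hτ2 hτ3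
      have hq := h.qf_pos hτ2.1 ⟨1, hτ2.2⟩
      have hqm := h.qf_pos hτ3.1 ⟨1, hτ3.2⟩
      have hFuv : Fu (v * qf Fu τ) < m * τ := by
        rw [div_lt_iff₀ hτ2.1] at hτ1
        linarith [hτ1]
      have hle : v * qf Fu τ ≤ qf Fu (m * τ) := by
        apply h.le_qf ⟨1, hτ3.2⟩
        intro z hz
        by_contra hzc
        push_neg at hzc
        have : Fu z ≤ Fu (v * qf Fu τ) := h.mono (le_of_lt hzc)
        have : Fu z < m * τ := lt_of_le_of_lt this hFuv
        exact absurd hz (not_lt.mpr (le_of_lt this))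
      rw [lt_div_iff₀ hq]
      calc a * qf Fu τ < v * qf Fu τ := by nlinarith
        _ ≤ qf Fu (m * τ) := hle
  · intro b hb
    obtain ⟨v, hmv, hvb⟩ := exists_between hb
    have hv0 : 0 < v := lt_trans hmξ hmv
    have hvgt : m < v ^ (-1/ξ) := by
      have hh := Real.rpow_lt_rpow (le_of_lt hmξ) hmv h.hξ0
      rwa [← Real.rpow_mul (le_of_lt hm),
        show (-ξ) * (-1/ξ) = 1 by field_simp [ne_of_lt h.hξ], Real.rpow_one] at hh
    have hev : ∀ᶠ τ in 𝓝[>] (0:ℝ), m < Fu (v * qf Fu τ) / τ :=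
      (h.tendsto_fu_v_qf hv0).eventually_const_lt hvgt
    filter_upwards [hev, h.ev_base, hevm] with τ hτ1 hτ2 hτ3
    have hq := h.qf_pos hτ2.1 ⟨1, hτ2.2⟩
    have hFuv : m * τ < Fu (v * qf Fu τ) := by
      rw [lt_div_iff₀ hτ2.1] at hτ1
      linarith [hτ1]
    have hle : qf Fu (m * τ) ≤ v * qf Fu τ := h.qf_le hτ3.1 hFuv
    rw [div_lt_iff₀ hq]
    calc qf Fu (m * τ) ≤ v * qf Fu τ := hle
      _ < b * qf Fu τ := by nlinarith

end Tail
end ExtremalQR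

theorem extremal_qr_population_spacings_type3
    (d : ℕ) (hd : 1 ≤ d)
    (μ : Measure (Fin d → ℝ)) [IsProbabilityMeasure μ]
    (Xs : Set (Fin d → ℝ))
    (hXssupp : ∀ x, x ∈ Xs ↔ ∀ U ∈ 𝓝 x, 0 < μ U)
    (hXscpt : IsCompact Xs)
    (hposdef : (Matrix.of fun i j : Fin d => ∫ x, x i * x j ∂μ).PosDef)
    (hmean : ∀ i : Fin d, (∫ x, x i ∂μ) = if (i : ℕ) = 0 then (1:ℝ) else 0)
    (η : ℝ) (hη : η ∈ Set.Ioc (0:ℝ) 1)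
    (γ : ℝ → Fin d → ℝ)
    (F : (Fin d → ℝ) → ℝ → ℝ)
    (hFmono : ∀ x ∈ Xs, Monotone (F x))
    (hFrc : ∀ x ∈ Xs, ∀ z : ℝ, ContinuousWithinAt (F x) (Set.Ici z) z)
    (hFrange : ∀ x ∈ Xs, ∀ z : ℝ, F x z ∈ Set.Icc (0:ℝ) 1)
    (hlin : ∀ τ ∈ Set.Ioc (0:ℝ) η, ∀ x ∈ Xs, sInf {z | τ < F x z} = ∑ i, x i * γ τ i)
    (Fu : ℝ → ℝ)
    (hFumono : Monotone Fu)
    (hFurc : ∀ z : ℝ, ContinuousWithinAt Fu (Set.Ici z) z)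
    (hFurange : ∀ z : ℝ, Fu z ∈ Set.Icc (0:ℝ) 1)
    (hFuinv : ∀ τ ∈ Set.Ioc (0:ℝ) η, sInf {z | τ < Fu z} = ∑ i, (∫ x, x i ∂μ) * γ τ i)
    (K : (Fin d → ℝ) → ℝ)
    (hKcont : ContinuousOn K Xs)
    (hKbdd : BddAbove (K '' Xs))
    (hKpos : ∀ x ∈ Xs, 0 < K x)
    (ξ : ℝ) (hξ : ξ < 0)
    (hFu0 : ∀ z < (0:ℝ), Fu z = 0)
    (hFupos : ∀ z > (0:ℝ), 0 < Fu z)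
    (hreg : ∀ v > (0:ℝ), Tendsto (fun z => Fu (v * z) / Fu z) (𝓝[>] (0:ℝ)) (𝓝 (v ^ (-1/ξ))))
    (htaileq : TendstoUniformlyOn (fun z x => F x z / Fu z) K (𝓝[>] (0:ℝ)) Xs)
    :
    ∃ c : Fin d → ℝ, (∑ i, (∫ x, x i ∂μ) * c i) = 1 ∧
      (∀ x ∈ Xs, 0 < (∑ i, x i * c i) ∧ K x = (∑ i, x i * c i) ^ (1/ξ)) ∧
      ∀ x ∈ Xs, ∀ x' ∈ Xs, ∀ l > (0:ℝ), ∀ m ∈ Set.Ioo (0:ℝ) 1 ∪ Set.Ioi 1,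
        Tendsto (fun τ => (∑ i, x i * (γ (m * l * τ) i - γ (l * τ) i)) /
            (∑ i, x' i * (γ (m * τ) i - γ τ i))) (𝓝[>] (0:ℝ))
          (𝓝 (l ^ (-ξ) * (∑ i, x i * c i) / (∑ i, x' i * c i))) ∧
        ∀ᶠ τ in 𝓝[>] (0:ℝ), (∑ i, x' i * (γ (m * τ) i - γ τ i)) ≠ 0 := by
  classical
  obtain ⟨hη0, hη1⟩ := hη
  have ht : ExtremalQR.Tail Fu ξ :=
    ⟨hFumono, hFurc, fun z => (hFurange z).1, hξ, hFu0, hFupos, hreg⟩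
  set q : ℝ → ℝ := ExtremalQR.qf Fu with hqdef
  have hξne : ξ ≠ 0 := ne_of_lt hξ
  -- support facts
  have hXsnull : μ Xsᶜ = 0 := by
    apply measure_null_of_locally_null
    intro x hx
    have := (hXssupp x).not.mp (by exact hx)
    push_neg at this
    obtain ⟨U, hU, hU0⟩ := this
    exact ⟨U, nhdsWithin_le_nhds hU, le_antisymm hU0 zero_le⟩
  have hXsae : ∀ᵐ a ∂μ, a ∈ Xs := by
    rw [MeasureTheory.ae_iff]
    exact hXsnull
  have hXsne : Xs.Nonempty := by
    rcases Set.eq_empty_or_nonempty Xs with h0 | h0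
    · exfalso
      have : μ Set.univ = 0 := by
        rw [← Set.compl_empty, ← h0]; exact hXsnull
      rw [measure_univ] at this
      exact one_ne_zero this
    · exact h0
  -- K minimum
  obtain ⟨xm, hxm, hxmle'⟩ := hXscpt.exists_isMinOn hXsne hKcont
  have hxmle : ∀ y ∈ Xs, K xm ≤ K y := fun y hy => hxmle' hy
  set Kmin := K xm with hKmin
  have hKminpos : 0 < Kmin := hKpos xm hxm
  have hFu1 : 0 < Fu 1 := hFupos 1 one_pos
  -- master sandwich
  have hSAND : ∀ ε : ℝ, 0 < ε → ε < Kmin →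
      ∀ᶠ τ in 𝓝[>] (0:ℝ), ∀ x ∈ Xs,
        0 < q (τ/(K x + ε)) ∧
        q (τ/(K x + ε)) ≤ ∑ i, x i * γ τ i ∧
        (∑ i, x i * γ τ i) ≤ q (τ/(K x - ε)) ∧
        q (τ/(K x - ε)) ≤ q (τ/(Kmin - ε)) := by
    intro ε hε hεK
    have hKε : 0 < Kmin - ε := by linarith
    have huni := (Metric.tendstoUniformlyOn_iff.mp htaileq) ε hε
    obtain ⟨z₀, hz₀mem, hz₀sub⟩ := mem_nhdsGT_iff_exists_Ioo_subset.mp huni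
    have hz₀pos : (0:ℝ) < z₀ := hz₀mem
    have htail : ∀ z, 0 < z → z < z₀ → ∀ x ∈ Xs,
        (K x - ε) * Fu z < F x z ∧ F x z < (K x + ε) * Fu z := by
      intro z h1 h2 x hx
      have hdd := hz₀sub ⟨h1, h2⟩ x hx
      rw [Real.dist_eq, abs_sub_lt_iff] at hdd
      have hFz : 0 < Fu z := hFupos z h1
      constructor
      · have h3 := hdd.1
        calc (K x - ε) * Fu z < (F x z / Fu z) * Fu z := by
              apply mul_lt_mul_of_pos_right _ hFz
              linarith
          _ = F x z := div_mul_cancel₀ _ (ne_of_gt hFz)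
      · have h3 := hdd.2
        calc F x z = (F x z / Fu z) * Fu z := (div_mul_cancel₀ _ (ne_of_gt hFz)).symm
          _ < (K x + ε) * Fu z := by
              apply mul_lt_mul_of_pos_right _ hFz
              linarith
    have hF0 : ∀ x ∈ Xs, ∀ z ≤ (0:ℝ), F x z ≤ 0 := by
      intro x hx z hz
      have hlim : Tendsto (fun z' => (K x + ε) * Fu z') (𝓝[>] (0:ℝ)) (𝓝 0) := by
        have := ht.tendsto_zero.const_mul (K x + ε)
        simpa using this
      refine ge_of_tendsto hlim ?_
      have hmem : Set.Ioo (0:ℝ) z₀ ∈ 𝓝[>] (0:ℝ) :=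
        Ioo_mem_nhdsGT_of_mem ⟨le_refl 0, hz₀pos⟩
      filter_upwards [hmem] with z' hz'
      calc F x z ≤ F x z' := hFmono x hx (le_trans hz (le_of_lt hz'.1))
        _ ≤ (K x + ε) * Fu z' := le_of_lt (htail z' hz'.1 hz'.2 x hx).2
    have hevη : Set.Ioc (0:ℝ) η ∈ 𝓝[>] (0:ℝ) := Ioc_mem_nhdsGT_of_mem ⟨le_refl 0, hη0⟩
    have hev1 : Set.Ioo (0:ℝ) ((Kmin - ε) * Fu 1) ∈ 𝓝[>] (0:ℝ) :=
      Ioo_mem_nhdsGT_of_mem ⟨le_refl 0, mul_pos hKε hFu1⟩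
    have hTq : Tendsto (fun τ => q (τ / (Kmin - ε))) (𝓝[>] (0:ℝ)) (𝓝[>] (0:ℝ)) := by
      have h1 := ht.qf_tendsto.comp (ExtremalQR.tendsto_mul_nhdsWithin (inv_pos.mpr hKε))
      refine h1.congr fun τ => ?_
      simp only [Function.comp]
      rw [div_eq_inv_mul]
    have hev2 : ∀ᶠ τ in 𝓝[>] (0:ℝ), q (τ / (Kmin - ε)) < z₀ :=
      (hTq.mono_right nhdsWithin_le_nhds).eventually_lt_const hz₀pos
    filter_upwards [hevη, hev1, hev2] with τ hτη hτev1 hτq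
    intro x hx
    have hτ0 : 0 < τ := hτη.1
    have hKx := hxmle x hx
    have hc1 : 0 < K x + ε := by linarith
    have hc2 : 0 < K x - ε := by linarith
    have hτ1pos : 0 < τ / (K x + ε) := div_pos hτ0 hc1
    have hτ2pos : 0 < τ / (K x - ε) := div_pos hτ0 hc2
    have hτ2le : τ / (K x - ε) ≤ τ / (Kmin - ε) :=
      div_le_div_of_nonneg_left (le_of_lt hτ0) hKε (by linarith)
    have hτtopFu : τ / (Kmin - ε) < Fu 1 := by
      rw [div_lt_iff₀ hKε]
      nlinarith [hτev1.2]
    have hτ2Fu : τ / (K x - ε) < Fu 1 := lt_of_le_of_lt hτ2le hτtopFu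
    have hτ1le2 : τ / (K x + ε) ≤ τ / (K x - ε) :=
      div_le_div_of_nonneg_left (le_of_lt hτ0) hc2 (by linarith)
    have hτ1Fu : τ / (K x + ε) < Fu 1 := lt_of_le_of_lt hτ1le2 hτ2Fu
    have hne1 : {z | τ / (K x + ε) < Fu z}.Nonempty := ⟨1, hτ1Fu⟩
    have hne2 : {z | τ / (K x - ε) < Fu z}.Nonempty := ⟨1, hτ2Fu⟩
    have hnetop : {z | τ / (Kmin - ε) < Fu z}.Nonempty := ⟨1, hτtopFu⟩
    have hq2top : q (τ / (K x - ε)) ≤ q (τ / (Kmin - ε)) :=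
      ht.qf_mono hτ2pos hτ2le hnetop
    have hq2z₀ : q (τ / (K x - ε)) < z₀ := lt_of_le_of_lt hq2top hτq
    have hq12 : q (τ / (K x + ε)) ≤ q (τ / (K x - ε)) :=
      ht.qf_mono hτ1pos hτ1le2 hne2
    have hSx := hlin τ hτη x hx
    have hW : ∀ w, q (τ / (K x - ε)) < w → w < z₀ → τ < F x w := by
      intro w hw1 hw2
      have hFuw : τ / (K x - ε) < Fu w := ht.lt_fu_of_qf_lt hne2 hw1
      have hw0 : 0 < w := lt_of_le_of_lt (ht.qf_nonneg hτ2pos) hw1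
      have h4 := (htail w hw0 hw2 x hx).1
      have h5 : (K x - ε) * (τ / (K x - ε)) < F x w :=
        lt_trans (mul_lt_mul_of_pos_left hFuw hc2) h4
      rwa [mul_comm, div_mul_cancel₀ _ (ne_of_gt hc2)] at h5
    have hSne : {z | τ < F x z}.Nonempty :=
      ⟨(q (τ / (K x - ε)) + z₀)/2, hW _ (by linarith) (by linarith)⟩
    have hSbdd : BddBelow {z | τ < F x z} := by
      refine ⟨0, fun z hz => ?_⟩
      by_contra hz0
      push_neg at hz0
      exact absurd hz (not_lt.mpr (le_trans (hF0 x hx z (le_of_lt hz0)) (le_of_lt hτ0)))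
    refine ⟨ht.qf_pos hτ1pos hne1, ?_, ?_, hq2top⟩
    · rw [← hSx]
      apply le_csInf hSne
      intro z hz
      have hz0 : 0 < z := by
        by_contra h0
        push_neg at h0
        exact absurd hz (not_lt.mpr (le_trans (hF0 x hx z h0) (le_of_lt hτ0)))
      rcases lt_or_ge z z₀ with hzz | hzz
      · have h6 := (htail z hz0 hzz x hx).2
        have hz' : τ < F x z := hz
        have hFz : τ / (K x + ε) < Fu z := by
          rw [div_lt_iff₀ hc1]
          calc τ < F x z := hz'
            _ < (K x + ε) * Fu z := h6
            _ = Fu z * (K x + ε) := mul_comm _ _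
        exact ht.qf_le hτ1pos hFz
      · calc q (τ / (K x + ε)) ≤ q (τ / (K x - ε)) := hq12
          _ ≤ z₀ := le_of_lt hq2z₀
          _ ≤ z := hzz
    · rw [← hSx]
      by_contra hub
      push_neg at hub
      set sI := sInf {z | τ < F x z} with hsI
      have hw1 : q (τ / (K x - ε)) < min ((q (τ / (K x - ε)) + sI)/2) ((q (τ / (K x - ε)) + z₀)/2) :=
        lt_min (by linarith) (by linarith)
      have hw2 : min ((q (τ / (K x - ε)) + sI)/2) ((q (τ / (K x - ε)) + z₀)/2) < z₀ :=
        lt_of_le_of_lt (min_le_right _ _) (by linarith)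
      have hwS := hW _ hw1 hw2
      have h7 : sI ≤ _ := csInf_le hSbdd hwS
      have h8 : min ((q (τ / (K x - ε)) + sI)/2) ((q (τ / (K x - ε)) + z₀)/2) < sI :=
        lt_of_le_of_lt (min_le_left _ _) (by linarith)
      linarith
  -- ratio limits for q (τ/c) / q τ
  have hql : ∀ c : ℝ, 0 < c → Tendsto (fun τ => q (τ / c) / q τ) (𝓝[>] (0:ℝ))
      (𝓝 (c ^ ξ)) := by
    intro c hc
    have h1 := ht.qf_ratio (inv_pos.mpr hc)
    have h2 : (c⁻¹) ^ (-ξ) = c ^ ξ := by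
      rw [Real.inv_rpow (le_of_lt hc), Real.rpow_neg (le_of_lt hc), inv_inv]
    rw [h2] at h1
    refine h1.congr fun τ => ?_
    show ExtremalQR.qf Fu (c⁻¹ * τ) / ExtremalQR.qf Fu τ
      = ExtremalQR.qf Fu (τ / c) / ExtremalQR.qf Fu τ
    rw [inv_mul_eq_div]
  -- pointwise limit of quantile ratios
  have hGlim : ∀ x ∈ Xs, Tendsto (fun τ => (∑ i, x i * γ τ i) / q τ) (𝓝[>] (0:ℝ))
      (𝓝 (K x ^ ξ)) := by
    intro x hx
    have hKx0 := hKpos x hx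
    have hKxmin := hxmle x hx
    rw [Metric.tendsto_nhds]
    intro δ hδ
    have hrc : ContinuousAt (fun t : ℝ => t ^ ξ) (K x) :=
      Real.continuousAt_rpow_const _ _ (Or.inl (ne_of_gt hKx0))
    rw [Metric.continuousAt_iff] at hrc
    obtain ⟨ε', hε'0, hε'⟩ := hrc (δ/2) (by linarith)
    set ε := min (ε'/2) (Kmin/2) with hεdef
    have hε0 : 0 < ε := lt_min (by linarith) (by linarith)
    have hεK : ε < Kmin := lt_of_le_of_lt (min_le_right _ _) (by linarith)
    have hεε' : ε < ε' := lt_of_le_of_lt (min_le_left _ _) (by linarith)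
    have hc2 : 0 < K x - ε := by linarith
    have hc1 : 0 < K x + ε := by linarith
    have hub : (K x - ε) ^ ξ < K x ^ ξ + δ/2 := by
      have hdist : dist (K x - ε) (K x) < ε' := by
        rw [Real.dist_eq, show K x - ε - K x = -ε by ring, abs_neg, abs_of_pos hε0]
        exact hεε'
      have h3 := hε' hdist
      rw [Real.dist_eq, abs_sub_lt_iff] at h3
      linarith [h3.1]
    have hlb : K x ^ ξ - δ/2 < (K x + ε) ^ ξ := by
      have hdist : dist (K x + ε) (K x) < ε' := by
        rw [Real.dist_eq, show K x + ε - K x = ε by ring, abs_of_pos hε0]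
        exact hεε'
      have h3 := hε' hdist
      rw [Real.dist_eq, abs_sub_lt_iff] at h3
      linarith [h3.2]
    have hev1 : ∀ᶠ τ in 𝓝[>] (0:ℝ), q (τ / (K x - ε)) / q τ < K x ^ ξ + δ :=
      (hql (K x - ε) hc2).eventually_lt_const (by linarith)
    have hev2 : ∀ᶠ τ in 𝓝[>] (0:ℝ), K x ^ ξ - δ < q (τ / (K x + ε)) / q τ :=
      (hql (K x + ε) hc1).eventually_const_lt (by linarith)
    filter_upwards [hSAND ε hε0 hεK, hev1, hev2, ht.ev_qf_pos] with τ hs h1 h2 hqpos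
    obtain ⟨hpos, hlow, hupp, _⟩ := hs x hx
    rw [Real.dist_eq, abs_sub_lt_iff]
    constructor
    · have h4 : (∑ i, x i * γ τ i)/q τ ≤ q (τ/(K x - ε))/q τ :=
        (div_le_div_iff_of_pos_right hqpos).mpr hupp
      linarith
    · have h4 : q (τ/(K x + ε))/q τ ≤ (∑ i, x i * γ τ i)/q τ :=
        (div_le_div_iff_of_pos_right hqpos).mpr hlow
      linarith
  -- uniform bound
  obtain ⟨C, hC0, hCev⟩ : ∃ C : ℝ, 0 < C ∧ ∀ᶠ τ in 𝓝[>] (0:ℝ), ∀ x ∈ Xs,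
      ‖(∑ i, x i * γ τ i) / q τ‖ ≤ C := by
    refine ⟨(Kmin/2) ^ ξ + 1, by positivity, ?_⟩
    have hε0 : 0 < Kmin/2 := by linarith
    have hεK : Kmin/2 < Kmin := by linarith
    have htopev : ∀ᶠ τ in 𝓝[>] (0:ℝ), q (τ / (Kmin/2)) / q τ < (Kmin/2) ^ ξ + 1 :=
      (hql (Kmin/2) hε0).eventually_lt_const (lt_add_one _)
    filter_upwards [hSAND (Kmin/2) hε0 hεK, htopev, ht.ev_qf_pos] with τ hs h1 hqpos
    intro x hx
    obtain ⟨hpos, hlow, hupp, htop2⟩ := hs x hx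
    have heq : Kmin - Kmin/2 = Kmin/2 := by ring
    rw [heq] at htop2
    have hnn : 0 ≤ (∑ i, x i * γ τ i) := le_trans (le_of_lt hpos) hlow
    have hub : (∑ i, x i * γ τ i)/q τ ≤ q (τ/(Kmin/2))/q τ :=
      (div_le_div_iff_of_pos_right hqpos).mpr (le_trans hupp htop2)
    rw [Real.norm_eq_abs, abs_le]
    constructor
    · have := div_nonneg hnn (le_of_lt hqpos)
      have hC : (0:ℝ) < (Kmin/2) ^ ξ + 1 := by positivity
      linarith
    · linarith
  -- construction of c
  obtain ⟨c, hc⟩ : ∃ c : Fin d → ℝ,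
      ∀ x : Fin d → ℝ, Tendsto (fun τ => (∑ i, x i * γ τ i) / q τ) (𝓝[>] (0:ℝ))
        (𝓝 (∑ i, x i * c i)) := by
    obtain ⟨R, hR⟩ := isBounded_iff_forall_norm_le.mp hXscpt.isBounded
    obtain ⟨x0, hx0⟩ := hXsne
    have hR0 : 0 ≤ R := le_trans (norm_nonneg x0) (hR x0 hx0)
    have hintg : ∀ (g : (Fin d → ℝ) → ℝ) (B : ℝ), Continuous g →
        (∀ a ∈ Xs, ‖g a‖ ≤ B) → Integrable g μ := by
      intro g B hg hB
      refine ⟨hg.aestronglyMeasurable,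
        MeasureTheory.HasFiniteIntegral.of_bounded (C := B) ?_⟩
      filter_upwards [hXsae] with a ha
      exact hB a ha
    set κ : (Fin d → ℝ) → ℝ := fun a => if a ∈ Xs then K a ^ ξ else 0 with hκ
    set M : Matrix (Fin d) (Fin d) ℝ := Matrix.of fun i j => ∫ a, a i * a j ∂μ with hM
    have hcont_inner : ∀ τ, Continuous (fun a : Fin d → ℝ => (∑ j, a j * γ τ j) / q τ) :=
      fun τ => (continuous_finset_sum _ fun j _ =>
        (continuous_apply j).mul continuous_const).div_const _
    have hint : ∀ i, Tendsto (fun τ => ∫ a, a i * ((∑ j, a j * γ τ j) / q τ) ∂μ)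
        (𝓝[>] (0:ℝ)) (𝓝 (∫ a, a i * κ a ∂μ)) := by
      intro i
      apply MeasureTheory.tendsto_integral_filter_of_dominated_convergence
        (bound := fun _ => R * C)
      · exact Eventually.of_forall fun τ =>
          ((continuous_apply i).mul (hcont_inner τ)).aestronglyMeasurable
      · filter_upwards [hCev] with τ hτ
        filter_upwards [hXsae] with a ha
        rw [norm_mul]
        have h1 : ‖a i‖ ≤ R := le_trans (norm_le_pi_norm a i) (hR a ha)
        exact mul_le_mul h1 (hτ a ha) (norm_nonneg _) hR0
      · exact MeasureTheory.integrable_const _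
      · filter_upwards [hXsae] with a ha
        have h2 : a i * κ a = a i * K a ^ ξ := by rw [hκ]; simp [ha]
        rw [h2]
        exact (hGlim a ha).const_mul (a i)
    have hswap : ∀ᶠ τ in 𝓝[>] (0:ℝ), ∀ i,
        (∫ a, a i * ((∑ j, a j * γ τ j) / q τ) ∂μ) = ∑ j, M i j * (γ τ j / q τ) := by
      filter_upwards [ht.ev_qf_pos] with τ hq
      intro i
      have h1 : (fun a : Fin d → ℝ => a i * ((∑ j, a j * γ τ j) / q τ))
          = fun a => ∑ j, (a i * a j) * (γ τ j / q τ) := by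
        funext a
        rw [Finset.sum_div, Finset.mul_sum]
        apply Finset.sum_congr rfl
        intro j _
        ring
      rw [h1, MeasureTheory.integral_finset_sum]
      · apply Finset.sum_congr rfl
        intro j _
        rw [MeasureTheory.integral_mul_const]
        simp only [hM, Matrix.of_apply]
      · intro j _
        refine hintg _ (R * R * |γ τ j / q τ|)
          (((continuous_apply i).mul (continuous_apply j)).mul continuous_const) ?_
        intro a ha
        rw [norm_mul, norm_mul]
        have h1 : ‖a i‖ ≤ R := le_trans (norm_le_pi_norm a i) (hR a ha)
        have h2 : ‖a j‖ ≤ R := le_trans (norm_le_pi_norm a j) (hR a ha)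
        calc ‖a i‖ * ‖a j‖ * ‖γ τ j / q τ‖ ≤ R * R * ‖γ τ j / q τ‖ := by
              apply mul_le_mul_of_nonneg_right _ (norm_nonneg _)
              exact mul_le_mul h1 h2 (norm_nonneg _) hR0
          _ = R * R * |γ τ j / q τ| := by rw [Real.norm_eq_abs]
    have hMv : ∀ i, Tendsto (fun τ => ∑ j, M i j * (γ τ j / q τ)) (𝓝[>] (0:ℝ))
        (𝓝 (∫ a, a i * κ a ∂μ)) := by
      intro i
      refine (hint i).congr' ?_
      filter_upwards [hswap] with τ hτ using hτ i
    have hMposdef : M.PosDef := hposdef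
    have hdet : IsUnit M.det := (Matrix.isUnit_iff_isUnit_det M).mp hMposdef.isUnit
    have hNM : M⁻¹ * M = 1 := Matrix.nonsing_inv_mul M hdet
    refine ⟨fun i => ∑ j, M⁻¹ i j * (∫ a, a j * κ a ∂μ), ?_⟩
    intro x
    have hvc : ∀ i, Tendsto (fun τ => γ τ i / q τ) (𝓝[>] (0:ℝ))
        (𝓝 (∑ j, M⁻¹ i j * (∫ a, a j * κ a ∂μ))) := by
      intro i
      have h1 : Tendsto (fun τ => ∑ j, M⁻¹ i j * (∑ k, M j k * (γ τ k / q τ)))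
          (𝓝[>] (0:ℝ)) (𝓝 (∑ j, M⁻¹ i j * (∫ a, a j * κ a ∂μ))) :=
        tendsto_finset_sum _ fun j _ => (hMv j).const_mul _
      refine h1.congr fun τ => ?_
      have key : ∀ u : Fin d → ℝ, (∑ j, M⁻¹ i j * (∑ k, M j k * u k)) = u i := by
        intro u
        have h2 : M⁻¹.mulVec (M.mulVec u) = u := by
          rw [Matrix.mulVec_mulVec, hNM, Matrix.one_mulVec]
        calc (∑ j, M⁻¹ i j * (∑ k, M j k * u k)) = M⁻¹.mulVec (M.mulVec u) i := by
              simp [Matrix.mulVec, dotProduct]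
          _ = u i := by rw [h2]
      exact key _
    have h3 : Tendsto (fun τ => ∑ i, x i * (γ τ i / q τ)) (𝓝[>] (0:ℝ))
        (𝓝 (∑ i, x i * (∑ j, M⁻¹ i j * (∫ a, a j * κ a ∂μ)))) :=
      tendsto_finset_sum _ fun i _ => (hvc i).const_mul _
    refine h3.congr fun τ => ?_
    rw [Finset.sum_div]
    apply Finset.sum_congr rfl
    intro i _
    exact (mul_div_assoc _ _ _).symm
  have hxc : ∀ x ∈ Xs, (∑ i, x i * c i) = K x ^ ξ := fun x hx =>
    tendsto_nhds_unique (hc x) (hGlim x hx)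
  have hmeanc : (∑ i, (∫ a, a i ∂μ) * c i) = 1 := by
    have hev : ∀ᶠ τ in 𝓝[>] (0:ℝ),
        (∑ i, (∫ a, a i ∂μ) * γ τ i) / q τ = 1 := by
      filter_upwards [Ioc_mem_nhdsGT_of_mem ⟨le_refl (0:ℝ), hη0⟩, ht.ev_qf_pos]
        with τ hτ hq
      have h1 : q τ = ∑ i, (∫ a, a i ∂μ) * γ τ i := hFuinv τ hτ
      rw [← h1, div_self (ne_of_gt hq)]
    exact tendsto_nhds_unique ((hc (fun i => ∫ a, a i ∂μ)).congr' hev) tendsto_const_nhds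
  refine ⟨c, hmeanc, ?_, ?_⟩
  · intro x hx
    have h1 := hxc x hx
    have h2 : (0:ℝ) < K x ^ ξ := Real.rpow_pos_of_pos (hKpos x hx) _
    refine ⟨h1 ▸ h2, ?_⟩
    rw [h1, ← Real.rpow_mul (le_of_lt (hKpos x hx)),
      show ξ * (1/ξ) = 1 by field_simp, Real.rpow_one]
  · intro x hx x' hx' l hl m hm
    have hm0 : 0 < m := by
      rcases hm with hm | hm
      · exact hm.1
      · have : (1:ℝ) < m := hm
        linarith
    have hKx' : (0:ℝ) < K x' ^ ξ := Real.rpow_pos_of_pos (hKpos x' hx') ξ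
    have hmξ : m ^ (-ξ) ≠ 1 := by
      rcases hm with hm | hm
      · exact ne_of_lt (Real.rpow_lt_one (le_of_lt hm.1) hm.2 (by linarith))
      · exact ne_of_gt ((Real.one_lt_rpow_iff_of_pos hm0).mpr
          (Or.inl ⟨hm, by linarith⟩))
    have hdivmul : ∀ (A B C : ℝ), B ≠ 0 → C ≠ 0 → A / B * (B / C) = A / C := by
      intro A B C hB hC
      field_simp
    have hbase : ∀ y ∈ Xs, ∀ r : ℝ, 0 < r →
        Tendsto (fun τ => (∑ i, y i * γ (r * τ) i) / q τ) (𝓝[>] (0:ℝ))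
          (𝓝 (K y ^ ξ * r ^ (-ξ))) := by
      intro y hy r hr
      have h1 := (hGlim y hy).comp (ExtremalQR.tendsto_mul_nhdsWithin hr)
      have h2 : Tendsto (fun τ => q (r * τ) / q τ) (𝓝[>] (0:ℝ)) (𝓝 (r ^ (-ξ))) :=
        ht.qf_ratio hr
      have h3 := h1.mul h2
      refine h3.congr' ?_
      filter_upwards [ht.ev_qf_pos, (ExtremalQR.tendsto_mul_nhdsWithin hr).eventually ht.ev_qf_pos]
        with τ hq1 hq2
      simp only [Function.comp]
      exact hdivmul _ _ _ (ne_of_gt hq2) (ne_of_gt hq1)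
    have hsub : ∀ (y : Fin d → ℝ) (r : ℝ) (τ : ℝ),
        (∑ i, y i * γ (r * τ) i) / q τ - (∑ i, y i * γ τ i) / q τ
          = (∑ i, y i * (γ (r * τ) i - γ τ i)) / q τ := by
      intro y r τ
      rw [div_sub_div_same]
      congr 1
      rw [← Finset.sum_sub_distrib]
      apply Finset.sum_congr rfl
      intro i _
      ring
    have hNc : Tendsto (fun τ => (∑ i, x i * (γ (m*l*τ) i - γ (l*τ) i)) / q τ)
        (𝓝[>] (0:ℝ)) (𝓝 (K x ^ ξ * (m*l) ^ (-ξ) - K x ^ ξ * l ^ (-ξ))) := by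
      have hN := (hbase x hx (m*l) (mul_pos hm0 hl)).sub (hbase x hx l hl)
      refine hN.congr fun τ => ?_
      rw [div_sub_div_same]
      congr 1
      rw [← Finset.sum_sub_distrib]
      apply Finset.sum_congr rfl
      intro i _
      rw [show m * l * τ = m * (l * τ) by ring]
      ring
    have hDc : Tendsto (fun τ => (∑ i, x' i * (γ (m*τ) i - γ τ i)) / q τ)
        (𝓝[>] (0:ℝ)) (𝓝 (K x' ^ ξ * m ^ (-ξ) - K x' ^ ξ)) := by
      have hD' := (hbase x' hx' m hm0).sub (hGlim x' hx')
      refine hD'.congr fun τ => hsub x' m τ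
    have hBne : K x' ^ ξ * m ^ (-ξ) - K x' ^ ξ ≠ 0 := by
      intro hc0
      apply hmξ
      have h4 : K x' ^ ξ * (m ^ (-ξ) - 1) = 0 := by ring_nf; linarith [hc0]
      rcases mul_eq_zero.mp h4 with h5 | h5
      · exact absurd h5 (ne_of_gt hKx')
      · linarith [h5]
    constructor
    · have hdiv := hNc.div hDc hBne
      have heq : (K x ^ ξ * (m*l) ^ (-ξ) - K x ^ ξ * l ^ (-ξ))
            / (K x' ^ ξ * m ^ (-ξ) - K x' ^ ξ)
          = l ^ (-ξ) * (∑ i, x i * c i) / (∑ i, x' i * c i) := by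
        rw [hxc x hx, hxc x' hx']
        rw [Real.mul_rpow (le_of_lt hm0) (le_of_lt hl)]
        have h2 : m ^ (-ξ) - 1 ≠ 0 := sub_ne_zero.mpr hmξ
        rw [show K x ^ ξ * (m ^ (-ξ) * l ^ (-ξ)) - K x ^ ξ * l ^ (-ξ)
            = (K x ^ ξ * l ^ (-ξ)) * (m ^ (-ξ) - 1) by ring,
          show K x' ^ ξ * m ^ (-ξ) - K x' ^ ξ = K x' ^ ξ * (m ^ (-ξ) - 1) by ring,
          mul_div_mul_right _ _ h2]
        ring
      rw [← heq]
      refine hdiv.congr' ?_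
      filter_upwards [ht.ev_qf_pos] with τ hq
      simp only [Pi.div_apply]
      rw [div_div_eq_mul_div, div_mul_cancel₀ _ (ne_of_gt hq)]
    · have hne := hDc.eventually_ne hBne
      filter_upwards [hne, ht.ev_qf_pos] with τ h1 h2
      intro h0
      apply h1
      rw [h0, zero_div]
end

section
/- (Mean measure convergence, equations (9.40)–(9.41), type 3 tails) Under the linear quantile regression setup with type 3 tails of index ξ < 0, assume in addition that for each z ∈ ℝ the map x ↦ F(z|x) is Borel measurable on 𝐗. Then for every real u > 0 and every Borel set B ⊆ 𝐗: T·∫_B F(u·F_u⁻¹(1/T) | x) dμ(x) → u^{−1/ξ}·∫_B K(x) dμ(x) as the integer T → ∞. -/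
open MeasureTheory Filter Topology Real

lemma fu_tendsto_zero_aux {Fu : ℝ → ℝ} (hFumono : Monotone Fu)
    (hFurange : ∀ z : ℝ, Fu z ∈ Set.Icc (0:ℝ) 1)
    {ξ : ℝ} (hξ : ξ < 0)
    (hreg : ∀ v > (0:ℝ), Tendsto (fun z => Fu (v * z) / Fu z) (𝓝[>] (0:ℝ)) (𝓝 (v ^ (-1/ξ)))) :
    Tendsto Fu (𝓝[>] (0:ℝ)) (𝓝 0) := by
  have hlim := hFumono.tendsto_nhdsGT 0
  set c := sInf (Fu '' Set.Ioi 0) with hc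
  have hc0 : 0 ≤ c := by
    apply le_csInf (Set.Nonempty.image _ ⟨1, by norm_num⟩)
    rintro y ⟨z, hz, rfl⟩; exact (hFurange z).1
  rcases eq_or_lt_of_le hc0 with h|h
  · rwa [← h] at hlim
  · exfalso
    have h2 : Tendsto (fun z : ℝ => (2:ℝ) * z) (𝓝[>] (0:ℝ)) (𝓝[>] (0:ℝ)) := by
      apply tendsto_nhdsWithin_of_tendsto_nhds_of_eventually_within
      · have : Tendsto (fun z : ℝ => (2:ℝ) * z) (𝓝 (0:ℝ)) (𝓝 ((2:ℝ) * 0)) :=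
          (continuous_const.mul continuous_id).tendsto 0
        simpa using this.mono_left nhdsWithin_le_nhds
      · filter_upwards [self_mem_nhdsWithin] with z hz
        have : (0:ℝ) < z := hz
        exact Set.mem_Ioi.mpr (by linarith)
    have hlim2 : Tendsto (fun z => Fu ((2:ℝ) * z)) (𝓝[>] (0:ℝ)) (𝓝 c) := hlim.comp h2
    have hdiv : Tendsto (fun z => Fu ((2:ℝ) * z) / Fu z) (𝓝[>] (0:ℝ)) (𝓝 (c / c)) :=
      hlim2.div hlim (ne_of_gt h)
    have heq : (2:ℝ) ^ (-1/ξ) = c / c := tendsto_nhds_unique (hreg 2 (by norm_num)) hdiv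
    rw [div_self (ne_of_gt h)] at heq
    have hlog := congrArg Real.log heq
    rw [Real.log_rpow (by norm_num) (-1/ξ), Real.log_one] at hlog
    have hlog2 : 0 < Real.log 2 := Real.log_pos (by norm_num)
    have hp : 0 < -1/ξ := div_pos_of_neg_of_neg (by norm_num) hξ
    nlinarith

theorem mean_measure_convergence_type3
    (d : ℕ) (hd : 1 ≤ d)
    (μ : Measure (Fin d → ℝ)) [IsProbabilityMeasure μ]
    (Xs : Set (Fin d → ℝ))
    (hXssupp : ∀ x, x ∈ Xs ↔ ∀ U ∈ 𝓝 x, 0 < μ U)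
    (hXscpt : IsCompact Xs)
    (hposdef : (Matrix.of fun i j : Fin d => ∫ x, x i * x j ∂μ).PosDef)
    (hmean : ∀ i : Fin d, (∫ x, x i ∂μ) = if (i : ℕ) = 0 then (1:ℝ) else 0)
    (η : ℝ) (hη : η ∈ Set.Ioc (0:ℝ) 1)
    (γ : ℝ → Fin d → ℝ)
    (F : (Fin d → ℝ) → ℝ → ℝ)
    (hFmono : ∀ x ∈ Xs, Monotone (F x))
    (hFrc : ∀ x ∈ Xs, ∀ z : ℝ, ContinuousWithinAt (F x) (Set.Ici z) z)
    (hFrange : ∀ x ∈ Xs, ∀ z : ℝ, F x z ∈ Set.Icc (0:ℝ) 1)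
    (hlin : ∀ τ ∈ Set.Ioc (0:ℝ) η, ∀ x ∈ Xs, sInf {z | τ < F x z} = ∑ i, x i * γ τ i)
    (Fu : ℝ → ℝ)
    (hFumono : Monotone Fu)
    (hFurc : ∀ z : ℝ, ContinuousWithinAt Fu (Set.Ici z) z)
    (hFurange : ∀ z : ℝ, Fu z ∈ Set.Icc (0:ℝ) 1)
    (hFuinv : ∀ τ ∈ Set.Ioc (0:ℝ) η, sInf {z | τ < Fu z} = ∑ i, (∫ x, x i ∂μ) * γ τ i)
    (K : (Fin d → ℝ) → ℝ)
    (hKcont : ContinuousOn K Xs)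
    (hKbdd : BddAbove (K '' Xs))
    (hKpos : ∀ x ∈ Xs, 0 < K x)
    (ξ : ℝ) (hξ : ξ < 0)
    (hFu0 : ∀ z < (0:ℝ), Fu z = 0)
    (hFupos : ∀ z > (0:ℝ), 0 < Fu z)
    (hreg : ∀ v > (0:ℝ), Tendsto (fun z => Fu (v * z) / Fu z) (𝓝[>] (0:ℝ)) (𝓝 (v ^ (-1/ξ))))
    (htaileq : TendstoUniformlyOn (fun z x => F x z / Fu z) K (𝓝[>] (0:ℝ)) Xs)
    (hFmeas : ∀ z : ℝ, Measurable (Xs.restrict (fun x => F x z)))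
    :
    ∀ u > (0:ℝ), ∀ B : Set (Fin d → ℝ), MeasurableSet B → B ⊆ Xs →
      Tendsto (fun T : ℕ =>
          (T:ℝ) * ∫ x in B, F x (u * sInf {z | (1:ℝ) / (T:ℝ) < Fu z}) ∂μ) atTop
        (𝓝 (u ^ (-1/ξ) * ∫ x in B, K x ∂μ)) := by
  intro u hu B hB hBXs
  set c : ℝ := u ^ (-1/ξ) with hcdef
  have hcpos : 0 < c := Real.rpow_pos_of_pos hu _
  have hFu00 : Tendsto Fu (𝓝[>] (0:ℝ)) (𝓝 0) := fu_tendsto_zero_aux hFumono hFurange hξ hreg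
  set q : ℕ → ℝ := fun T => sInf {z | (1:ℝ) / (T:ℝ) < Fu z} with hqdef
  suffices hmain : Tendsto (fun T : ℕ => (T:ℝ) * ∫ x in B, F x (u * q T) ∂μ) atTop
      (𝓝 (c * ∫ x in B, K x ∂μ)) by exact hmain
  -- basic facts about the sets S_T
  have hSsub : ∀ T : ℕ, {z | (1:ℝ)/(T:ℝ) < Fu z} ⊆ Set.Ici 0 := by
    intro T z hz
    by_contra hzneg
    simp only [Set.mem_Ici, not_le] at hzneg
    rw [Set.mem_setOf_eq, hFu0 z (by simpa using hzneg)] at hz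
    have h0 : (0:ℝ) ≤ 1/(T:ℝ) := by positivity
    linarith
  have hSbdd : ∀ T : ℕ, BddBelow {z | (1:ℝ)/(T:ℝ) < Fu z} := fun T => ⟨0, hSsub T⟩
  have hmem : ∀ ε > (0:ℝ), ∀ᶠ T : ℕ in atTop, (1:ℝ)/(T:ℝ) < Fu ε := by
    intro ε hε
    have h1 : 0 < Fu ε := hFupos ε hε
    obtain ⟨N, hN⟩ := exists_nat_gt (1 / Fu ε)
    filter_upwards [eventually_gt_atTop N] with T hT
    have hTR : (1/Fu ε) < (T:ℝ) := lt_of_lt_of_le hN (by exact_mod_cast hT.le)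
    have hTpos : (0:ℝ) < T := lt_of_le_of_lt (by positivity) hTR
    rw [div_lt_iff₀ h1] at hTR
    rw [div_lt_iff₀ hTpos]
    nlinarith
  have hSne : ∀ᶠ T : ℕ in atTop, {z | (1:ℝ)/(T:ℝ) < Fu z}.Nonempty :=
    (hmem 1 one_pos).mono fun T h => ⟨1, h⟩
  have hq_le : ∀ ε > (0:ℝ), ∀ᶠ T : ℕ in atTop, q T ≤ ε := by
    intro ε hε
    exact (hmem ε hε).mono fun T h => csInf_le (hSbdd T) h
  have hqpos : ∀ᶠ T : ℕ in atTop, 0 < q T := by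
    filter_upwards [hSne, eventually_ge_atTop 1] with T hne hT1
    have hT1R : (1:ℝ) ≤ T := by exact_mod_cast hT1
    have hTpos : (0:ℝ) < 1/(T:ℝ) := by
      have : (0:ℝ) < T := by linarith
      positivity
    have hev : ∀ᶠ z in 𝓝[>](0:ℝ), Fu z < 1/(T:ℝ) := hFu00.eventually (gt_mem_nhds hTpos)
    obtain ⟨z, hz1, hz2⟩ := (hev.and self_mem_nhdsWithin).exists
    have hlb : ∀ w ∈ {w | (1:ℝ)/(T:ℝ) < Fu w}, z ≤ w := by
      intro w hw
      by_contra hwz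
      push_neg at hwz
      have := hFumono hwz.le
      rw [Set.mem_setOf_eq] at hw
      linarith
    exact lt_of_lt_of_le hz2 (le_csInf hne hlb)
  have hq0 : Tendsto q atTop (𝓝[>] (0:ℝ)) := by
    rw [tendsto_nhdsWithin_iff]
    constructor
    · rw [tendsto_order]
      constructor
      · intro a ha
        filter_upwards [hqpos] with T hT
        linarith
      · intro a ha
        filter_upwards [hq_le (a/2) (by linarith)] with T hT
        linarith
    · exact hqpos
  have hFuq_ge : ∀ᶠ T : ℕ in atTop, (1:ℝ)/(T:ℝ) ≤ Fu (q T) := by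
    filter_upwards [hSne] with T hne
    by_contra hlt
    push_neg at hlt
    have hev : ∀ᶠ w in 𝓝[Set.Ici (q T)] (q T), Fu w < 1/(T:ℝ) :=
      (hFurc (q T)).tendsto.eventually (gt_mem_nhds hlt)
    rw [eventually_nhdsWithin_iff] at hev
    rw [Metric.eventually_nhds_iff] at hev
    obtain ⟨δ, hδ, hball⟩ := hev
    have hlb : ∀ w ∈ {z | (1:ℝ)/(T:ℝ) < Fu z}, q T + δ ≤ w := by
      intro w hw
      rw [Set.mem_setOf_eq] at hw
      have hwq : q T ≤ w := csInf_le (hSbdd T) hw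
      by_contra hcon
      push_neg at hcon
      have hdist : dist w (q T) < δ := by
        rw [Real.dist_eq, abs_of_nonneg (by linarith)]
        linarith
      have := hball hdist (Set.mem_Ici.mpr hwq)
      linarith
    have := le_csInf hne hlb
    have hq' : q T = sInf {z | (1:ℝ)/(T:ℝ) < Fu z} := rfl
    linarith [hq' ▸ this]
  -- T * Fu (q T) → 1
  have hξne : ξ ≠ 0 := ne_of_lt hξ
  have hTFuq : Tendsto (fun T : ℕ => (T:ℝ) * Fu (q T)) atTop (𝓝 1) := by
    rw [Metric.tendsto_nhds]
    intro ε hε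
    set v : ℝ := (1 + ε/2) ^ ξ with hv
    have h1e : (1:ℝ) < 1 + ε/2 := by linarith
    have hv0 : 0 < v := Real.rpow_pos_of_pos (by linarith) ξ
    have hv1 : v < 1 := Real.rpow_lt_one_of_one_lt_of_neg h1e hξ
    have hvval : v ^ (-1/ξ) = (1 + ε/2)⁻¹ := by
      rw [hv, ← Real.rpow_mul (by linarith)]
      have : ξ * (-1/ξ) = -1 := by field_simp
      rw [this, Real.rpow_neg_one]
    have h1 := (hreg v hv0).comp hq0
    have h1' : Tendsto (fun T : ℕ => (Fu (v * q T) / Fu (q T))⁻¹) atTop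
        (𝓝 ((v ^ (-1/ξ))⁻¹)) := h1.inv₀ (by rw [hvval]; positivity)
    have h2 : Tendsto (fun T : ℕ => Fu (q T) / Fu (v * q T)) atTop (𝓝 (1 + ε/2)) := by
      have heq : (fun T : ℕ => (Fu (v * q T) / Fu (q T))⁻¹)
          = fun T : ℕ => Fu (q T) / Fu (v * q T) := by
        funext T; rw [inv_div]
      rw [heq] at h1'
      rwa [hvval, inv_inv] at h1'
    have h3 : ∀ᶠ T : ℕ in atTop, Fu (q T) / Fu (v * q T) < 1 + ε :=
      h2.eventually (gt_mem_nhds (by linarith))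
    filter_upwards [h3, hFuq_ge, hqpos, eventually_ge_atTop 1] with T h3T hge hqT hT1
    have hT1R : (1:ℝ) ≤ T := by exact_mod_cast hT1
    have hTpos : (0:ℝ) < T := by linarith
    have hlow : 1 ≤ (T:ℝ) * Fu (q T) := by
      have := mul_le_mul_of_nonneg_left hge (le_of_lt hTpos)
      rwa [mul_one_div, div_self (ne_of_gt hTpos)] at this
    have hvq : 0 < v * q T := mul_pos hv0 hqT
    have hb : 0 < Fu (v * q T) := hFupos _ hvq
    have hnotin : v * q T ∉ {z | (1:ℝ)/(T:ℝ) < Fu z} := by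
      intro hmem'
      have := csInf_le (hSbdd T) hmem'
      nlinarith
    have hub : Fu (v * q T) ≤ 1/(T:ℝ) := by
      by_contra hcon
      push_neg at hcon
      exact hnotin hcon
    have hupper : (T:ℝ) * Fu (q T) < 1 + ε := by
      have hid : (T:ℝ) * Fu (q T) = (Fu (q T) / Fu (v * q T)) * ((T:ℝ) * Fu (v * q T)) := by
        field_simp
      have hs1 : (T:ℝ) * Fu (v * q T) ≤ 1 := by
        have := mul_le_mul_of_nonneg_left hub (le_of_lt hTpos)
        rwa [mul_one_div, div_self (ne_of_gt hTpos)] at this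
      have hs0 : 0 ≤ (T:ℝ) * Fu (v * q T) := mul_nonneg hTpos.le hb.le
      have hr0 : 0 ≤ Fu (q T) / Fu (v * q T) := div_nonneg (hFurange _).1 hb.le
      calc (T:ℝ) * Fu (q T) = (Fu (q T) / Fu (v * q T)) * ((T:ℝ) * Fu (v * q T)) := hid
        _ ≤ (Fu (q T) / Fu (v * q T)) * 1 := mul_le_mul_of_nonneg_left hs1 hr0
        _ < 1 + ε := by rw [mul_one]; exact h3T
    rw [Real.dist_eq, abs_lt]
    constructor <;> linarith
  have huq0 : Tendsto (fun T : ℕ => u * q T) atTop (𝓝[>] (0:ℝ)) := by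
    rw [tendsto_nhdsWithin_iff] at hq0 ⊢
    constructor
    · have := tendsto_const_nhds (x := u) (f := atTop (α := ℕ)) |>.mul hq0.1
      simpa using this
    · exact hq0.2.mono fun T hT => Set.mem_Ioi.mpr (mul_pos hu hT)
  have hcT : Tendsto (fun T : ℕ => (T:ℝ) * Fu (u * q T)) atTop (𝓝 c) := by
    have h1 := (hreg u hu).comp hq0
    have h2 := h1.mul hTFuq
    rw [mul_one] at h2
    apply h2.congr'
    filter_upwards [hqpos] with T hqT
    have hb : Fu (q T) ≠ 0 := ne_of_gt (hFupos _ hqT)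
    show Fu (u * q T) / Fu (q T) * ((T:ℝ) * Fu (q T)) = (T:ℝ) * Fu (u * q T)
    field_simp
  have hunif : ∀ ε > (0:ℝ), ∀ᶠ T : ℕ in atTop,
      ∀ x ∈ Xs, dist (K x) (F x (u * q T) / Fu (u * q T)) < ε := by
    intro ε hε
    exact huq0.eventually ((Metric.tendstoUniformlyOn_iff.1 htaileq) ε hε)
  -- bound for K
  obtain ⟨M0, hM0⟩ := hKbdd
  set M : ℝ := max M0 0 with hMdef
  have hMnn : 0 ≤ M := le_max_right _ _
  have hM : ∀ x ∈ Xs, |K x| ≤ M := by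
    intro x hx
    rw [abs_of_pos (hKpos x hx)]
    exact le_trans (hM0 ⟨x, hx, rfl⟩) (le_max_left _ _)
  -- key uniform estimate
  have key : ∀ ε > (0:ℝ), ∀ᶠ T : ℕ in atTop,
      ∀ x ∈ B, |(T:ℝ) * F x (u * q T) - c * K x| ≤ ε := by
    intro ε hε
    have hc1 : (0:ℝ) < c + 1 := by linarith
    have hM1 : (0:ℝ) < M + 1 := by linarith
    have hδ1 : 0 < ε/(2*(c+1)) := by positivity
    have hδ2 : 0 < ε/(2*(M+1)) := by positivity
    have hc2 : ∀ᶠ T : ℕ in atTop,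
        dist ((T:ℝ) * Fu (u * q T)) c < min 1 (ε/(2*(M+1))) :=
      Metric.tendsto_nhds.1 hcT _ (lt_min one_pos hδ2)
    filter_upwards [hunif _ hδ1, hc2, hqpos] with T hgT hcT' hqT
    intro x hxB
    have hx : x ∈ Xs := hBXs hxB
    have hz : 0 < u * q T := mul_pos hu hqT
    have hbz : (0:ℝ) < Fu (u * q T) := hFupos _ hz
    set a : ℝ := (T:ℝ) * Fu (u * q T) with ha
    set g : ℝ := F x (u * q T) / Fu (u * q T) with hg
    have hid : (T:ℝ) * F x (u * q T) = a * g := by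
      rw [ha, hg]; field_simp
    have hac : |a - c| < min 1 (ε/(2*(M+1))) := by
      rw [← Real.dist_eq]; exact hcT'
    have haabs : |a| ≤ c + 1 := by
      have h1 : |a - c| < 1 := lt_of_lt_of_le hac (min_le_left _ _)
      have := abs_sub_abs_le_abs_sub a c
      have hcabs : |c| = c := abs_of_pos hcpos
      linarith
    have hgK : |g - K x| ≤ ε/(2*(c+1)) := by
      have := hgT x hx
      rw [dist_comm, Real.dist_eq] at this
      linarith
    have hKx : |K x| ≤ M + 1 := by linarith [hM x hx]
    rw [hid]
    calc |a * g - c * K x| = |a * (g - K x) + (a - c) * K x| := by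
          rw [show a * g - c * K x = a * (g - K x) + (a - c) * K x from by ring]
      _ ≤ |a * (g - K x)| + |(a - c) * K x| := abs_add_le _ _
      _ = |a| * |g - K x| + |a - c| * |K x| := by
          rw [abs_mul a (g - K x), abs_mul (a - c) (K x)]
      _ ≤ (c+1) * (ε/(2*(c+1))) + (ε/(2*(M+1))) * (M+1) := by
          apply add_le_add
          · exact mul_le_mul haabs hgK (abs_nonneg _) (by linarith)
          · exact mul_le_mul (le_of_lt (lt_of_lt_of_le hac (min_le_right _ _))) hKx
              (abs_nonneg _) (le_of_lt hδ2)
      _ ≤ ε := by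
          have e1 : (c+1) * (ε/(2*(c+1))) = ε/2 := by field_simp
          have e2 : (ε/(2*(M+1))) * (M+1) = ε/2 := by field_simp
          rw [e1, e2]; linarith
  -- measurability and integrability
  have hXsm : MeasurableSet Xs := hXscpt.isClosed.measurableSet
  have hFaesm : ∀ z : ℝ, AEStronglyMeasurable (fun x => F x z) (μ.restrict B) := by
    intro z
    have hemb : MeasurableEmbedding (Subtype.val : Xs → (Fin d → ℝ)) :=
      MeasurableEmbedding.subtype_coe hXsm
    have hext : Measurable
        (Function.extend Subtype.val (Xs.restrict fun x => F x z) fun _ => (0:ℝ)) :=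
      hemb.measurable_extend (hFmeas z) measurable_const
    refine hext.aestronglyMeasurable.congr ?_
    filter_upwards [ae_restrict_mem hB] with x hx
    have hxs : x ∈ Xs := hBXs hx
    have heq : Function.extend (Subtype.val : Xs → (Fin d → ℝ))
        (Xs.restrict fun x => F x z) (fun _ => (0:ℝ)) x
        = F x z := by
      have : x = (Subtype.val (⟨x, hxs⟩ : Xs)) := rfl
      rw [this, Subtype.val_injective.extend_apply]
      rfl
    exact heq
  have hKaesm : AEStronglyMeasurable K (μ.restrict B) :=
    ((hKcont.mono hBXs).aemeasurable hB).aestronglyMeasurable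
  have hKint : IntegrableOn K B μ := by
    apply Integrable.mono' (integrable_const M) hKaesm
    filter_upwards [ae_restrict_mem hB] with x hx
    rw [Real.norm_eq_abs]
    exact hM x (hBXs hx)
  have hFint : ∀ z : ℝ, IntegrableOn (fun x => F x z) B μ := by
    intro z
    apply Integrable.mono' (integrable_const 1) (hFaesm z)
    filter_upwards [ae_restrict_mem hB] with x hx
    have h := hFrange x (hBXs hx) z
    rw [Real.norm_eq_abs, abs_of_nonneg h.1]
    exact h.2
  -- final convergence
  rw [Metric.tendsto_nhds]
  intro ε hε
  filter_upwards [key (ε/2) (half_pos hε)] with T hT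
  have hint1 : IntegrableOn (fun x => (T:ℝ) * F x (u * q T)) B μ :=
    (hFint (u * q T)).const_mul _
  have hint2 : IntegrableOn (fun x => c * K x) B μ := hKint.const_mul _
  have h1 : (T:ℝ) * ∫ x in B, F x (u * q T) ∂μ
      = ∫ x in B, (T:ℝ) * F x (u * q T) ∂μ := (integral_const_mul _ _).symm
  have h2 : c * ∫ x in B, K x ∂μ = ∫ x in B, c * K x ∂μ := (integral_const_mul _ _).symm
  rw [Real.dist_eq, h1, h2, ← integral_sub hint1 hint2]
  have hbound : ‖∫ x in B, ((T:ℝ) * F x (u * q T) - c * K x) ∂μ‖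
      ≤ (ε/2) * (μ B).toReal := by
    apply norm_setIntegral_le_of_norm_le_const (measure_lt_top _ _)
    · intro x hx
      rw [Real.norm_eq_abs]
      exact hT x hx
  have hμB : (μ B).toReal ≤ 1 := by
    have h := prob_le_one (μ := μ) (s := B)
    have h2 := ENNReal.toReal_mono ENNReal.one_ne_top h
    simpa using h2
  rw [Real.norm_eq_abs] at hbound
  calc |∫ x in B, ((T:ℝ) * F x (u * q T) - c * K x) ∂μ| ≤ (ε/2) * (μ B).toReal := hbound
    _ ≤ (ε/2) * 1 := by
        apply mul_le_mul_of_nonneg_left hμB (by linarith)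
    _ < ε := by linarith
end
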